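/- If G is a finitely generated group with arbitrarily large finite quotients, then for every positive integer n there exists a finite generating set A of G such that the dead-end depth of G with respect to A is at least n. -/

import Mathlib

/-- Word length of `g` with respect to generating set `S` (using `S ∪ S⁻¹`). -/
noncomputable def wl {G : Type*} [Group G] (S : Set G) (g : G) : ℕ :=
  sInf {n | ∃ l : List G, (∀ x ∈ l, x ∈ S ∨ x⁻¹ ∈ S) ∧ l.length = n ∧ l.prod = g}

/-- Word metric with respect to `S`. -/
noncomputable def wdist {G : Type*} [Group G] (S : Set G) (g h : G) : ℕ := wl S (g⁻¹ * h)

/-- Dead-end depth of `g` with respect to `A`: distance to the nearest element strictly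
farther from the identity, `⊤` if none exists. -/
noncomputable def depth {G : Type*} [Group G] (A : Set G) (g : G) : ℕ∞ :=
  sInf ((fun g' => (wdist A g g' : ℕ∞)) '' {g' | wl A g < wl A g'})

/-- Partial product `u 0 * u 1 * ⋯ * u (i-1)`. -/
def pprod {M : Type*} [Monoid M] (u : ℕ → M) (i : ℕ) : M := ((List.range i).map u).prod

section helpers

variable {G : Type*} [Group G] {S : Set G}

lemma exists_word (hS : Subgroup.closure S = ⊤) (g : G) :
    ∃ l : List G, (∀ x ∈ l, x ∈ S ∨ x⁻¹ ∈ S) ∧ l.prod = g := by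
  have hg : g ∈ Submonoid.closure (S ∪ S⁻¹) := by
    rw [← Subgroup.closure_toSubmonoid]
    exact hS ▸ Subgroup.mem_top g
  obtain ⟨l, hl, hp⟩ := Submonoid.exists_list_of_mem_closure hg
  refine ⟨l, fun x hx => ?_, hp⟩
  rcases hl x hx with h | h
  · exact Or.inl h
  · exact Or.inr (Set.mem_inv.mp h)

lemma wl_le {g : G} {l : List G} (h1 : ∀ x ∈ l, x ∈ S ∨ x⁻¹ ∈ S) (h2 : l.prod = g) :
    wl S g ≤ l.length :=
  Nat.sInf_le ⟨l, h1, rfl, h2⟩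

lemma wl_one : wl S (1 : G) = 0 :=
  Nat.le_zero.mp (wl_le (l := []) (by simp) (by simp))

lemma exists_min_word (hS : Subgroup.closure S = ⊤) (g : G) :
    ∃ l : List G, (∀ x ∈ l, x ∈ S ∨ x⁻¹ ∈ S) ∧ l.length = wl S g ∧ l.prod = g := by
  obtain ⟨l, hl, hp⟩ := exists_word hS g
  have hne : {n | ∃ l : List G, (∀ x ∈ l, x ∈ S ∨ x⁻¹ ∈ S) ∧ l.length = n ∧ l.prod = g}.Nonempty :=
    ⟨l.length, l, hl, rfl, hp⟩
  exact Nat.sInf_mem hne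

lemma wl_inv_le (hS : Subgroup.closure S = ⊤) (g : G) : wl S g⁻¹ ≤ wl S g := by
  obtain ⟨l, hl, hlen, hp⟩ := exists_min_word hS g
  have hp' : ((l.map fun x => x⁻¹).reverse).prod = g⁻¹ := by
    rw [← List.prod_inv_reverse, hp]
  have hlt : ∀ x ∈ (l.map fun x => x⁻¹).reverse, x ∈ S ∨ x⁻¹ ∈ S := by
    intro x hx
    rw [List.mem_reverse, List.mem_map] at hx
    obtain ⟨y, hy, rfl⟩ := hx
    rcases hl y hy with h | h
    · exact Or.inr (by simpa using h)
    · exact Or.inl h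
  calc wl S g⁻¹ ≤ ((l.map fun x => x⁻¹).reverse).length := wl_le hlt hp'
    _ = wl S g := by simpa using hlen

lemma wl_inv (hS : Subgroup.closure S = ⊤) (g : G) : wl S g⁻¹ = wl S g :=
  le_antisymm (wl_inv_le hS g) (by simpa using wl_inv_le hS g⁻¹)

lemma wl_mul_le (hS : Subgroup.closure S = ⊤) (g h : G) :
    wl S (g * h) ≤ wl S g + wl S h := by
  obtain ⟨l1, hl1, hlen1, hp1⟩ := exists_min_word hS g
  obtain ⟨l2, hl2, hlen2, hp2⟩ := exists_min_word hS h
  have := wl_le (S := S) (l := l1 ++ l2) (g := g * h)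
    (by intro x hx; rcases List.mem_append.mp hx with h' | h'
        exacts [hl1 x h', hl2 x h'])
    (by rw [List.prod_append, hp1, hp2])
  simpa [hlen1, hlen2] using this

/-- transporting a word along a homomorphism -/
lemma wl_map_le {Q : Type*} [Group Q] {A : Set G} {P : Set Q} (π : G →* Q)
    (hA : Subgroup.closure A = ⊤) (hAP : ∀ x ∈ A, π x ∈ P) (g : G) :
    wl P (π g) ≤ wl A g := by
  obtain ⟨l, hl, hlen, hp⟩ := exists_min_word hA g
  have hp' : (l.map π).prod = π g := by rw [← hp]; exact (List.prod_hom l π).symm ▸ rfl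
  have hlt : ∀ y ∈ l.map π, y ∈ P ∨ y⁻¹ ∈ P := by
    intro y hy
    rw [List.mem_map] at hy
    obtain ⟨x, hx, rfl⟩ := hy
    rcases hl x hx with h | h
    · exact Or.inl (hAP x h)
    · exact Or.inr (by rw [← map_inv]; exact hAP _ h)
  calc wl P (π g) ≤ (l.map π).length := wl_le hlt hp'
    _ = wl A g := by simpa using hlen

/-- padding a word with ones to reach exact length -/
lemma exists_exact_word {P : Set G} (hP : Subgroup.closure P = ⊤) (h1 : (1 : G) ∈ P)
    (hsym : ∀ x : G, x⁻¹ ∈ P → x ∈ P) (z : G) (m : ℕ) (hm : wl P z ≤ m) :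
    ∃ l : List G, (∀ x ∈ l, x ∈ P) ∧ l.length = m ∧ l.prod = z := by
  obtain ⟨l, hl, hlen, hp⟩ := exists_min_word hP z
  refine ⟨l ++ List.replicate (m - l.length) 1, ?_, ?_, ?_⟩
  · intro x hx
    rcases List.mem_append.mp hx with h | h
    · rcases hl x h with h' | h'
      · exact h'
      · exact hsym x h'
    · rw [List.eq_of_mem_replicate h]; exact h1
  · simp [hlen]; omega
  · simp [List.prod_append, hp]

/-- bound on product of a list whose letters have bounded word length -/
lemma wl_prod_le (hS : Subgroup.closure S = ⊤) {A : Set G} {R : ℕ}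
    (hbound : ∀ x : G, (x ∈ A ∨ x⁻¹ ∈ A) → wl S x ≤ R) :
    ∀ l : List G, (∀ x ∈ l, x ∈ A ∨ x⁻¹ ∈ A) → wl S l.prod ≤ R * l.length
  | [], _ => by simpa using wl_one.le
  | x :: l, h => by
    have h1 : wl S x ≤ R := hbound x (h x List.mem_cons_self)
    have h2 : wl S l.prod ≤ R * l.length :=
      wl_prod_le hS hbound l (fun y hy => h y (List.mem_cons_of_mem x hy))
    calc wl S (x :: l).prod = wl S (x * l.prod) := by rw [List.prod_cons]
      _ ≤ wl S x + wl S l.prod := wl_mul_le hS _ _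
      _ ≤ R + R * l.length := Nat.add_le_add h1 h2
      _ = R * (x :: l).length := by simp [List.length_cons, Nat.mul_succ, Nat.add_comm]

/-- balls are finite -/
lemma ball_finite (hS : Subgroup.closure S = ⊤) (hfin : S.Finite) (R : ℕ) :
    {g : G | wl S g ≤ R}.Finite := by
  classical
  set K : Set G := S ∪ S⁻¹ with hK
  have hKfin : K.Finite := hfin.union hfin.inv
  haveI : Finite K := hKfin.to_subtype
  have hlists : {l : List K | l.length ≤ R}.Finite := List.finite_length_le K R
  apply Set.Finite.subset ((hlists.image (fun l : List K => (l.map Subtype.val).prod)))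
  intro g hg
  obtain ⟨l, hl, hlen, hp⟩ := exists_min_word hS g
  have hmem : ∀ x ∈ l, x ∈ K := by
    intro x hx
    rcases hl x hx with h | h
    · exact Or.inl h
    · exact Or.inr (Set.mem_inv.mpr h)
  refine ⟨l.attach.map (fun x => (⟨x.1, hmem x.1 x.2⟩ : K)), ?_, ?_⟩
  · simpa using hlen.le.trans hg
  · simp only [List.map_map]
    have : (l.attach.map fun x => ((⟨x.1, hmem x.1 x.2⟩ : K) : G)) = l := by
      simp [Function.comp]
    simpa [Function.comp] using this ▸ hp

end helpers

section main

variable {G Q : Type*} [Group G] [Group Q]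

/-- Main splitting lemma: an element with a short enough `S`-word and a `P`-word of its image
of length `m` is a product of exactly `m` elements of the generating set `A`. -/
lemma main_split (S : Set G) (hS : Subgroup.closure S = ⊤) (π : G →* Q)
    (h : Q → G) (hh : ∀ z, π (h z) = z) (hone : h 1 = 1)
    (D E : ℕ) (hD : ∀ z, wl S (h z) ≤ D) (hDE : D ≤ E) (P : Set Q) :
    ∀ m (g : G) (ls : List G), (∀ x ∈ ls, x ∈ S ∨ x⁻¹ ∈ S) → ls.prod = g →
      ls.length ≤ m * E → ∀ lz : List Q, (∀ z ∈ lz, z ∈ P) → lz.length = m →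
      lz.prod = π g →
      ∃ la : List G, (∀ x ∈ la, x ∈ {y : G | π y ∈ P ∧ wl S y ≤ E + 2 * D}) ∧
        la.length = m ∧ la.prod = g := by
  intro m
  induction m with
  | zero =>
    intro g ls _ hprod hlen lz _ hlzlen _
    have : ls = [] := List.length_eq_zero_iff.mp (Nat.le_zero.mp (by simpa using hlen))
    refine ⟨[], by simp, rfl, ?_⟩
    simp [← hprod, this]
  | succ m ih =>
    intro g ls hls hprod hlen lz hlz hlzlen hlzprod
    match lz, hlzlen with
    | z :: lz', hlzlen =>
    have hz : z ∈ P := hlz z List.mem_cons_self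
    have hlz' : ∀ y ∈ lz', y ∈ P := fun y hy => hlz y (List.mem_cons_of_mem z hy)
    have hlz'len : lz'.length = m := by simpa using hlzlen
    set k := ls.length with hk
    set j := min k (E + D) with hj
    set c := ls.take j with hc
    set u := h ((π c.prod)⁻¹ * z) with hu
    have hπu : π u = (π c.prod)⁻¹ * z := hh _
    obtain ⟨lu, hlu, hlulen, hluprod⟩ := exists_min_word hS u
    have hwlu : wl S u ≤ D := hlulen ▸ hD _
    -- the first letter
    set b := c.prod * u with hb
    have hπb : π b = z := by
      rw [hb, map_mul, hπu, mul_inv_cancel_left]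
    have hwlc : wl S c.prod ≤ j := by
      have := wl_le (S := S) (l := c)
        (fun x hx => hls x (List.mem_of_mem_take hx)) rfl
      calc wl S c.prod ≤ c.length := this
        _ ≤ j := by rw [hc, List.length_take]; exact min_le_left _ _
    have hwlb : wl S b ≤ E + 2 * D := by
      have h1 : wl S b ≤ wl S c.prod + wl S u := wl_mul_le hS _ _
      have h2 : j ≤ E + D := min_le_right _ _
      omega
    -- the remainder
    set g' := u⁻¹ * (ls.drop j).prod with hg'
    have hbg' : b * g' = g := by
      rw [hb, hg', mul_assoc, mul_inv_cancel_left, ← List.prod_append,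
        List.take_append_drop, hprod]
    have hπg' : lz'.prod = π g' := by
      have hzg : z * lz'.prod = π g := by
        rw [← hlzprod]; simp
      have : π g' = (π u)⁻¹ * ((π c.prod)⁻¹ * π g) := by
        have hdrop : (ls.drop j).prod = c.prod⁻¹ * g := by
          have : c.prod * (ls.drop j).prod = g := by
            rw [hc, ← List.prod_append, List.take_append_drop, hprod]
          rw [← this, inv_mul_cancel_left]
        rw [hg', map_mul, map_inv, hdrop, map_mul, map_inv]
      rw [this, hπu, mul_inv_rev, inv_inv]
      rw [← hzg]
      group
    -- the word for the remainder
    set rest := (lu.map fun x => x⁻¹).reverse ++ ls.drop j with hrest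
    have hrestprod : rest.prod = g' := by
      rw [hrest, List.prod_append, ← List.prod_inv_reverse, hluprod, hg']
    have hrestmem : ∀ x ∈ rest, x ∈ S ∨ x⁻¹ ∈ S := by
      intro x hx
      rcases List.mem_append.mp hx with h' | h'
      · rw [List.mem_reverse, List.mem_map] at h'
        obtain ⟨y, hy, rfl⟩ := h'
        rcases hlu y hy with h'' | h''
        · exact Or.inr (by simpa using h'')
        · exact Or.inl h''
      · exact hls x (List.mem_of_mem_drop h')
    have hrestlen : rest.length ≤ m * E := by
      have hlen' : k ≤ (m + 1) * E := hlen
      have hdroplen : (ls.drop j).length = k - j := by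
        rw [List.length_drop]
      rcases Nat.eq_zero_or_pos m with rfl | hm
      · -- m = 0 : then u = 1 and drop is empty
        have hkE : k ≤ E := by simpa using hlen'
        have hjk : j = k := by omega
        have hcg : c.prod = g := by
          rw [hc, hjk, hk, List.take_length, hprod]
        have hu1 : u = 1 := by
          have : lz' = [] := List.length_eq_zero_iff.mp hlz'len
          have hzg : z = π g := by
            rw [← hlzprod, this]; simp
          rw [hu, hcg, ← hzg, inv_mul_cancel, hone]
        have hlu0 : lu.length = 0 := by
          rw [hlulen, hu1, wl_one]
        have hr : rest.length = lu.length + (k - j) := by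
          simp [hrest, hdroplen]
        rw [hr, hlu0, hjk]
        omega
      · have hDm : D ≤ m * E := le_trans hDE (Nat.le_mul_of_pos_left E hm)
        have hlulenD : lu.length ≤ D := hlulen ▸ hD _
        simp only [hrest, List.length_append, List.length_reverse, List.length_map, hdroplen]
        rcases Nat.le_total k (E + D) with hke | hke
        · have hjk : j = k := by omega
          omega
        · have hjk : j = E + D := by omega
          have : k - j + D ≤ m * E := by
            rw [hjk]
            have : (m + 1) * E = m * E + E := by ring
            omega
          omega
    obtain ⟨la', hla', hla'len, hla'prod⟩ :=
      ih g' rest hrestmem hrestprod hrestlen lz' hlz' hlz'len hπg'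
    refine ⟨b :: la', ?_, ?_, ?_⟩
    · intro x hx
      rcases List.mem_cons.mp hx with rfl | hx'
      · exact ⟨hπb ▸ hz, hwlb⟩
      · exact hla' x hx'
    · simp [hla'len]
    · rw [List.prod_cons, hla'prod, hbg']

end main

section counting

lemma exists_deep {Q : Type*} [Group Q] [Finite Q] (P : Set Q)
    (hP : Subgroup.closure P = ⊤) (h1 : (1 : Q) ∈ P)
    (hsym : ∀ x : Q, x⁻¹ ∈ P → x ∈ P) (n : ℕ)
    (hcard : P.ncard ^ n < Nat.card Q) : ∃ z : Q, n < wl P z := by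
  by_contra hc
  push_neg at hc
  have hsurj : Function.Surjective
      (fun v : Fin n → P => (List.ofFn fun i => ((v i : Q))).prod) := by
    intro z
    obtain ⟨l, hl, hlen, hp⟩ := exists_exact_word hP h1 hsym z n (hc z)
    subst hlen
    refine ⟨fun i => ⟨l.get i, hl _ (l.get_mem i)⟩, ?_⟩
    simp only
    rw [← hp]
    congr 1
    exact List.ofFn_get l
  have hle := Nat.card_le_card_of_surjective _ hsurj
  rw [Nat.card_fun] at hle
  simp only [Nat.card_eq_fintype_card, Fintype.card_fin, Nat.card_coe_set_eq] at hle
  omega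

end counting

/-- If `G` is finitely generated with arbitrarily large finite quotients, then for every
positive integer `n` there is a finite generating set `A` of `G` with respect to which the
dead-end depth of `G` is at least `n`. -/
theorem stmt13 {G : Type*} [Group G] [Group.FG G]
    (hquot : ∀ m : ℕ, ∃ (Q : Type) (_ : Group Q) (_ : Finite Q) (π : G →* Q),
      Function.Surjective π ∧ m ≤ Nat.card Q) :
    ∀ n : ℕ, 0 < n → ∃ A : Set G, A.Finite ∧ Subgroup.closure A = ⊤ ∧
      (n : ℕ∞) ≤ ⨆ g : G, depth A g := by
  intro n hn
  classical
  obtain ⟨S, hSgen, hSfin⟩ := Group.fg_iff.mp ‹Group.FG G›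
  set s := S.ncard with hs
  obtain ⟨Q, _, _, π, hsurj, hQcard⟩ := hquot ((2 * s + 1) ^ n + 1)
  -- the image generating set of `Q`
  set P : Set Q := π '' (S ∪ S⁻¹) ∪ {1} with hPdef
  have hPone : (1 : Q) ∈ P := Or.inr rfl
  have hPsym : ∀ x : Q, x⁻¹ ∈ P → x ∈ P := by
    intro x hx
    rcases hx with ⟨y, hy, hyx⟩ | hx
    · refine Or.inl ⟨y⁻¹, ?_, by rw [map_inv, hyx, inv_inv]⟩
      rcases hy with hy | hy
      · exact Or.inr (Set.mem_inv.mpr (by simpa using hy))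
      · exact Or.inl (Set.mem_inv.mp hy)
    · exact Or.inr (by simpa using (inv_eq_one.mp hx))
  have hPgen : Subgroup.closure P = ⊤ := by
    have h1 : Subgroup.closure (π '' S) = ⊤ := by
      rw [← MonoidHom.map_closure, hSgen, Subgroup.map_top_of_surjective π hsurj]
    apply top_unique
    rw [← h1]
    exact Subgroup.closure_mono (Set.Subset.trans
      (Set.image_mono (f := π) Set.subset_union_left) Set.subset_union_left)
  have hPcard : P.ncard ≤ 2 * s + 1 := by
    have h1 : P.ncard ≤ (π '' (S ∪ S⁻¹)).ncard + 1 := by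
      rw [hPdef, Set.union_singleton]
      exact Set.ncard_insert_le _ _
    have h2 : (π '' (S ∪ S⁻¹)).ncard ≤ (S ∪ S⁻¹).ncard :=
      Set.ncard_image_le (hSfin.union hSfin.inv)
    have h3 : (S ∪ S⁻¹).ncard ≤ S.ncard + S⁻¹.ncard := Set.ncard_union_le S S⁻¹
    have h4 : S⁻¹.ncard ≤ S.ncard := by
      rw [← Set.image_inv_eq_inv]
      exact Set.ncard_image_le hSfin
    omega
  -- a deepest element of `Q`
  obtain ⟨zdeep, hzdeep⟩ := exists_deep P hPgen hPone hPsym n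
    (by
      have h1 : P.ncard ^ n ≤ (2 * s + 1) ^ n := Nat.pow_le_pow_left hPcard n
      omega)
  obtain ⟨z0, hz0⟩ := Finite.exists_max (fun z : Q => wl P z)
  set L := wl P z0 with hL
  have hLn : n < L := lt_of_lt_of_le hzdeep (hz0 zdeep)
  -- coset representatives
  set h' : Q → G := fun z => if z = 1 then 1 else Function.surjInv hsurj z with hh'def
  have hh : ∀ z, π (h' z) = z := by
    intro z
    by_cases hz1 : z = 1
    · simp [hh'def, hz1]
    · simp [hh'def, hz1, Function.surjInv_eq hsurj]
  have hone : h' 1 = 1 := if_pos rfl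
  obtain ⟨zD, hzD⟩ := Finite.exists_max (fun z : Q => wl S (h' z))
  set D := wl S (h' zD) with hD0
  have hD : ∀ z, wl S (h' z) ≤ D := hzD
  set E := (2 * n + 1) * D + 1 with hE
  have hDE : D ≤ E := by
    have : D ≤ (2 * n + 1) * D := Nat.le_mul_of_pos_left D (by omega)
    omega
  have hEpos : 1 ≤ E := by omega
  -- the generating set
  set A : Set G := {y : G | π y ∈ P ∧ wl S y ≤ E + 2 * D} with hA
  have hAfin : A.Finite :=
    (ball_finite hSgen hSfin (E + 2 * D)).subset (fun x hx => hx.2)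
  -- `A` generates
  have hAgen : Subgroup.closure A = ⊤ := by
    apply top_unique
    intro g _
    obtain ⟨ls, hls, hlslen, hlsprod⟩ := exists_min_word hSgen g
    set m := wl P (π g) + ls.length with hm
    obtain ⟨lz, hlz, hlzlen, hlzprod⟩ :=
      exists_exact_word hPgen hPone hPsym (π g) m (by omega)
    obtain ⟨la, hla, hlalen, hlaprod⟩ :=
      main_split S hSgen π h' hh hone D E hD hDE P m g ls hls hlsprod
        (by
          have : m ≤ m * E := Nat.le_mul_of_pos_right m (by omega)
          omega)
        lz hlz hlzlen hlzprod
    rw [← hlaprod]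
    exact Subgroup.list_prod_mem _ (fun x hx => Subgroup.subset_closure (hla x hx))
  refine ⟨A, hAfin, hAgen, ?_⟩
  -- the deep dead end
  set gstar := h' z0 with hgstar
  have hπgstar : π gstar = z0 := hh z0
  -- an upper bound machine : elements with small S-length have A-length at most L
  have hupper : ∀ g' : G, wl S g' ≤ L * E → wl A g' ≤ L := by
    intro g' hg'
    obtain ⟨ls, hls, hlslen, hlsprod⟩ := exists_min_word hSgen g'
    obtain ⟨lz, hlz, hlzlen, hlzprod⟩ :=
      exists_exact_word hPgen hPone hPsym (π g') L (hz0 _)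
    obtain ⟨la, hla, hlalen, hlaprod⟩ :=
      main_split S hSgen π h' hh hone D E hD hDE P L g' ls hls hlsprod
        (by omega) lz hlz hlzlen hlzprod
    have := wl_le (S := A) (l := la) (fun x hx => Or.inl (hla x hx)) hlaprod
    omega
  have hwlAgstar : wl A gstar = L := by
    have hle : wl A gstar ≤ L := by
      apply hupper
      have h1 : wl S gstar ≤ D := hD z0
      have h2 : E ≤ L * E := Nat.le_mul_of_pos_left E (by omega)
      omega
    have hge : L ≤ wl A gstar := by
      have := wl_map_le (A := A) (P := P) π hAgen (fun x hx => hx.1) gstar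
      rw [hπgstar] at this
      omega
    omega
  have key : ∀ g' : G, wl A gstar < wl A g' → (n : ℕ∞) ≤ (wdist A gstar g' : ℕ∞) := by
    intro g' hgt
    have : n ≤ wdist A gstar g' := by
      by_contra hlt
      push_neg at hlt
      set w := gstar⁻¹ * g' with hw
      have hwn : wl A w ≤ n := Nat.le_of_lt_succ (Nat.lt_succ_of_lt hlt)
      obtain ⟨lw, hlw, hlwlen, hlwprod⟩ := exists_min_word hAgen w
      have hbound : ∀ x : G, (x ∈ A ∨ x⁻¹ ∈ A) → wl S x ≤ E + 2 * D := by
        intro x hx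
        rcases hx with hx | hx
        · exact hx.2
        · have := hx.2
          rwa [wl_inv hSgen] at this
      have hwlSw : wl S w ≤ (E + 2 * D) * n := by
        have h1 := wl_prod_le hSgen hbound lw hlw
        rw [hlwprod, hlwlen] at h1
        have h2 : (E + 2 * D) * wl A w ≤ (E + 2 * D) * n :=
          Nat.mul_le_mul_left _ hwn
        omega
      have hwlSg' : wl S g' ≤ D + (E + 2 * D) * n := by
        have hgw : g' = gstar * w := by rw [hw, mul_inv_cancel_left]
        have h1 : wl S g' ≤ wl S gstar + wl S w := by
          rw [hgw]; exact wl_mul_le hSgen _ _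
        have h2 : wl S gstar ≤ D := hD z0
        omega
      have harith : D + (E + 2 * D) * n ≤ L * E := by
        have h2 : (n + 1) * E = (E + 2 * D) * n + D + 1 := by rw [hE]; ring
        have h3 : (n + 1) * E ≤ L * E := Nat.mul_le_mul_right E (by omega)
        omega
      have := hupper g' (by omega)
      omega
    exact_mod_cast this
  have hdepth : (n : ℕ∞) ≤ depth A gstar := by
    apply le_sInf
    rintro e ⟨g', hg', rfl⟩
    exact key g' hg'
  exact hdepth.trans (le_iSup (fun g => depth A g) gstar)
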